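/- The only bipartite χ'_ℓ-critical graphs with at least one edge are the stars K_{1,n}. -/

import Mathlib

/-- A coloring `c` of the vertices is proper if adjacent vertices get different colors. -/
def IsProperColoring {V α : Type*} (G : SimpleGraph V) (c : V → α) : Prop :=
  ∀ ⦃u w⦄, G.Adj u w → c u ≠ c w

/-- `c` is an `L`-coloring of `G`: a proper coloring with `c v ∈ L v` for every vertex `v`. -/
def IsListColoring {V : Type*} (G : SimpleGraph V) (L : V → Finset ℕ) (c : V → ℕ) : Prop :=
  IsProperColoring G c ∧ ∀ v, c v ∈ L v

/-- `G` is uniquely `f`-list colorable: there is a list assignment giving each vertex `v`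
a list of exactly `f v` colors, from which `G` has exactly one list coloring. -/
def UniquelyFListColorable {V : Type*} (G : SimpleGraph V) (f : V → ℕ) : Prop :=
  ∃ L : V → Finset ℕ, (∀ v, (L v).card = f v) ∧ ∃! c, IsListColoring G L c

/-- `G` is uniquely `k`-list colorable. -/
def UniquelyKListColorable {V : Type*} (G : SimpleGraph V) (k : ℕ) : Prop :=
  UniquelyFListColorable G (fun _ => k)

/-- The m-number of `G`: the least `k` for which `G` is not uniquely `k`-list colorable. -/
noncomputable def mNumber {V : Type*} (G : SimpleGraph V) : ℕ :=
  sInf {k | ¬ UniquelyKListColorable G k}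
/-- `G` is `k`-choosable: from every `k`-list assignment, `G` has a list coloring. -/
def Choosable {V : Type*} (G : SimpleGraph V) (k : ℕ) : Prop :=
  ∀ L : V → Finset ℕ, (∀ v, (L v).card = k) → ∃ c, IsListColoring G L c

/-- The list chromatic number of `G`: the least `k` such that `G` is `k`-choosable. -/
noncomputable def listChromaticNumber {V : Type*} (G : SimpleGraph V) : ℕ :=
  sInf {k | Choosable G k}

/-- `G` is `χ_ℓ`-critical: every proper subgraph has smaller list chromatic number. -/
def ListCritical {V : Type*} (G : SimpleGraph V) : Prop :=
  ∀ H : G.Subgraph, H ≠ ⊤ → listChromaticNumber H.coe < listChromaticNumber G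
/-- The list chromatic index of `G`: the list chromatic number of its line graph. -/
noncomputable def listChromaticIndex {V : Type*} (G : SimpleGraph V) : ℕ :=
  listChromaticNumber G.lineGraph

/-- The chromatic index of `G`: the chromatic number of its line graph. -/
noncomputable def chromaticIndex {V : Type*} (G : SimpleGraph V) : ℕ :=
  sInf {n | G.lineGraph.Colorable n}

/-- `G` is `χ'_ℓ`-critical: every proper subgraph has smaller list chromatic index. -/
def EdgeListCritical {V : Type*} (G : SimpleGraph V) : Prop :=
  ∀ H : G.Subgraph, H ≠ ⊤ → listChromaticIndex H.coe < listChromaticIndex G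

/-- `G` is `χ'`-critical: every proper subgraph has smaller chromatic index. -/
def EdgeCritical {V : Type*} (G : SimpleGraph V) : Prop :=
  ∀ H : G.Subgraph, H ≠ ⊤ → chromaticIndex H.coe < chromaticIndex G



open Finset

section Basics
variable {W : Type*} (H : SimpleGraph W)

lemma choosable_mono {k j : ℕ} (h : Choosable H k) (hkj : k ≤ j) : Choosable H j := by
  intro L hL
  choose L' hsub hcard using fun v => Finset.exists_subset_card_eq (show k ≤ (L v).card by rw [hL v]; exact hkj)
  obtain ⟨c, hc1, hc2⟩ := h L' hcard
  exact ⟨c, hc1, fun v => hsub v (hc2 v)⟩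

open scoped Classical in
noncomputable def rnk (W : Type*) [Fintype W] (w : W) : ℕ := ((Fintype.equivFin W) w : ℕ)

lemma rnk_inj {W : Type*} [Fintype W] : Function.Injective (rnk W) := by
  intro a b h
  have := Fin.val_injective h
  exact (Fintype.equivFin W).injective this

open scoped Classical in
noncomputable def greedy [Fintype W] (L : W → Finset ℕ) : W → ℕ := fun w =>
  let s := (L w) \ ((Finset.univ.filter (fun u => H.Adj u w ∧ rnk W u < rnk W w)).attach.image
      (fun u => greedy L u.1))
  if h : s.Nonempty then s.min' h else 0
termination_by w => rnk W w
decreasing_by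
  have := u.2
  simp only [Finset.mem_filter] at this
  exact this.2.2

open scoped Classical in
lemma greedy_spec [Fintype W] (L : W → Finset ℕ) (hL : ∀ v, Fintype.card W ≤ (L v).card) (w : W) :
    greedy H L w ∈ (L w) \ ((Finset.univ.filter (fun u => H.Adj u w ∧ rnk W u < rnk W w)).attach.image
      (fun u => greedy H L u.1)) := by
  rw [greedy]
  set s := (L w) \ ((Finset.univ.filter (fun u => H.Adj u w ∧ rnk W u < rnk W w)).attach.image
      (fun u => greedy H L u.1)) with hs
  have hne : s.Nonempty := by
    have h1 : ((Finset.univ.filter (fun u => H.Adj u w ∧ rnk W u < rnk W w)).attach.image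
      (fun u => greedy H L u.1)).card < Fintype.card W := by
      calc _ ≤ (Finset.univ.filter (fun u => H.Adj u w ∧ rnk W u < rnk W w)).attach.card :=
              Finset.card_image_le
        _ = (Finset.univ.filter (fun u => H.Adj u w ∧ rnk W u < rnk W w)).card := Finset.card_attach
        _ ≤ (Finset.univ.erase w).card := by
              apply Finset.card_le_card
              intro u hu
              simp only [Finset.mem_filter] at hu
              refine Finset.mem_erase.2 ⟨?_, Finset.mem_univ _⟩
              rintro rfl; exact lt_irrefl _ hu.2.2
        _ < Finset.univ.card := Finset.card_erase_lt_of_mem (Finset.mem_univ w)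
        _ = Fintype.card W := Finset.card_univ
    rw [hs, ← Finset.card_pos]
    have := Finset.le_card_sdiff ((Finset.univ.filter (fun u => H.Adj u w ∧ rnk W u < rnk W w)).attach.image
      (fun u => greedy H L u.1)) (L w)
    have h2 := hL w
    omega
  simp only [hne, dif_pos]
  exact s.min'_mem hne

lemma choosable_card [Fintype W] : Choosable H (Fintype.card W) := by
  classical
  intro L hL
  have hL' : ∀ v, Fintype.card W ≤ (L v).card := fun v => (hL v).ge
  refine ⟨greedy H L, ?_, ?_⟩
  · intro u w huw
    have hne : rnk W u ≠ rnk W w := fun h => (H.ne_of_adj huw) (rnk_inj h)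
    rcases hne.lt_or_gt with h | h
    · have := greedy_spec H L hL' w
      rw [Finset.mem_sdiff] at this
      intro hc
      refine this.2 (Finset.mem_image.2 ⟨⟨u, by simp [huw, h]⟩, Finset.mem_attach _ _, ?_⟩)
      show greedy H L u = greedy H L w
      exact hc
    · have := greedy_spec H L hL' u
      rw [Finset.mem_sdiff] at this
      intro hc
      refine this.2 (Finset.mem_image.2 ⟨⟨w, by simp [huw.symm, h]⟩, Finset.mem_attach _ _, ?_⟩)
      show greedy H L w = greedy H L u
      exact hc.symm
  · intro v
    exact (Finset.mem_sdiff.1 (greedy_spec H L hL' v)).1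

lemma lcn_le_of_choosable {k : ℕ} (h : Choosable H k) : listChromaticNumber H ≤ k :=
  Nat.sInf_le h

lemma choosable_of_lcn_le [Fintype W] {k : ℕ} (h : listChromaticNumber H ≤ k) : Choosable H k := by
  have hne : {k | Choosable H k}.Nonempty := ⟨_, choosable_card H⟩
  have hmem := Nat.sInf_mem hne
  exact choosable_mono H hmem h

lemma lt_lcn_of_not_choosable [Fintype W] {k : ℕ} (h : ¬ Choosable H k) : k < listChromaticNumber H :=
  lt_of_not_ge fun hle => h (choosable_of_lcn_le H hle)

end Basics


section Transfer
variable {W W' : Type*}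

lemma choosable_of_hom (H : SimpleGraph W) (H' : SimpleGraph W') (f : W → W')
    (hinj : Function.Injective f) (hadj : ∀ a b, H.Adj a b → H'.Adj (f a) (f b))
    {k : ℕ} (h : Choosable H' k) : Choosable H k := by
  classical
  intro L hL
  set L' : W' → Finset ℕ := fun x => if h : ∃ a, f a = x then L h.choose else Finset.range k with hL'def
  have hL' : ∀ x, (L' x).card = k := by
    intro x
    by_cases hx : ∃ a, f a = x
    · simp only [hL'def, dif_pos hx]; exact hL _
    · simp only [hL'def, dif_neg hx, Finset.card_range]
  obtain ⟨c, hc1, hc2⟩ := h L' hL'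
  refine ⟨c ∘ f, fun a b hab => hc1 (hadj _ _ hab), fun a => ?_⟩
  have hx : ∃ a', f a' = f a := ⟨a, rfl⟩
  have hch : hx.choose = a := hinj hx.choose_spec
  have := hc2 (f a)
  simp only [hL'def, dif_pos hx, hch] at this
  exact this

lemma lcn_mono [Fintype W'] (H : SimpleGraph W) (H' : SimpleGraph W') (f : W → W')
    (hinj : Function.Injective f) (hadj : ∀ a b, H.Adj a b → H'.Adj (f a) (f b)) :
    listChromaticNumber H ≤ listChromaticNumber H' :=
  lcn_le_of_choosable H (choosable_of_hom H H' f hinj hadj (choosable_of_lcn_le H' le_rfl))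

lemma lcn_iso [Fintype W] [Fintype W'] (H : SimpleGraph W) (H' : SimpleGraph W') (e : H ≃g H') :
    listChromaticNumber H = listChromaticNumber H' :=
  le_antisymm
    (lcn_mono H H' e e.toEquiv.injective (fun _ _ h => e.map_adj_iff.2 h))
    (lcn_mono H' H e.symm e.symm.toEquiv.injective (fun _ _ h => e.symm.map_adj_iff.2 h))

/-- A graph in which all distinct vertices are adjacent has list chromatic number = card. -/
lemma lcn_clique [Fintype W] (H : SimpleGraph W) (hc : ∀ a b : W, a ≠ b → H.Adj a b) :
    listChromaticNumber H = Fintype.card W := by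
  classical
  refine le_antisymm (lcn_le_of_choosable H (choosable_card H)) ?_
  rcases Nat.eq_zero_or_pos (Fintype.card W) with h0 | hpos
  · omega
  have hnc : ¬ Choosable H (Fintype.card W - 1) := by
    intro hch
    obtain ⟨c, hc1, hc2⟩ := hch (fun _ => Finset.range (Fintype.card W - 1))
      (fun _ => Finset.card_range _)
    have hcinj : Function.Injective c := by
      intro a b hab
      by_contra hne
      exact hc1 (hc a b hne) hab
    have := Fintype.card_le_of_injective
      (fun w : W => (⟨c w, Finset.mem_range.1 (hc2 w)⟩ : Fin (Fintype.card W - 1)))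
      (fun a b hab => hcinj (by simpa using congrArg Fin.val hab))
    simp only [Fintype.card_fin] at this
    omega
  have := lt_lcn_of_not_choosable H hnc
  omega

end Transfer


section LineTransfer
open SimpleGraph
variable {V : Type} [Fintype V] {G : SimpleGraph V}

noncomputable instance fintypeSym2 : Fintype (Sym2 V) := by classical exact inferInstance

noncomputable instance fintypeSetSym2 (s : Set (Sym2 V)) : Fintype s := Fintype.ofFinite _

noncomputable instance fintypeVerts (H : G.Subgraph) : Fintype H.verts := Fintype.ofFinite _

noncomputable instance fintypeCoeEdge (H : G.Subgraph) : Fintype H.coe.edgeSet := Fintype.ofFinite _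

lemma subgraph_edge_mem (H : G.Subgraph) (e : Sym2 H.verts) (he : e ∈ H.coe.edgeSet) :
    Sym2.map Subtype.val e ∈ G.edgeSet := by
  induction e with
  | _ a b =>
    rw [SimpleGraph.mem_edgeSet] at he
    rw [Sym2.map_pair_eq, SimpleGraph.mem_edgeSet]
    exact H.adj_sub ((H.coe_adj a b) ▸ he)

/-- the natural injection from edges of a subgraph's coercion to edges of `G`. -/
noncomputable def edgeMap (H : G.Subgraph) (e : H.coe.edgeSet) : G.edgeSet :=
  ⟨Sym2.map Subtype.val e.1, subgraph_edge_mem H e.1 e.2⟩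

lemma edgeMap_injective (H : G.Subgraph) : Function.Injective (edgeMap H) := by
  intro e f hef
  have := congrArg Subtype.val hef
  simp only [edgeMap] at this
  exact Subtype.ext (Sym2.map.injective Subtype.val_injective this)

lemma edgeMap_adj (H : G.Subgraph) (e f : H.coe.edgeSet)
    (h : H.coe.lineGraph.Adj e f) : G.lineGraph.Adj (edgeMap H e) (edgeMap H f) := by
  obtain ⟨hne, w, hw1, hw2⟩ := (SimpleGraph.lineGraph_adj_iff_exists).1 h
  refine (SimpleGraph.lineGraph_adj_iff_exists).2 ⟨?_, w.1, ?_, ?_⟩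
  · intro hc; exact hne (edgeMap_injective H hc)
  · exact Sym2.mem_map.2 ⟨w, hw1, rfl⟩
  · exact Sym2.mem_map.2 ⟨w, hw2, rfl⟩

lemma lcIndex_subgraph_le (H : G.Subgraph) :
    listChromaticIndex H.coe ≤ listChromaticIndex G :=
  lcn_mono _ _ (edgeMap H) (edgeMap_injective H) (edgeMap_adj H)

lemma lcIndex_eq_card_of_clique {X : Type*} [Fintype X] (K : SimpleGraph X)
    [Fintype K.edgeSet]
    (h : ∀ e f : K.edgeSet, e ≠ f → K.lineGraph.Adj e f) :
    listChromaticIndex K = Fintype.card K.edgeSet :=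
  lcn_clique _ h

/-- If every edge of `G` contains `z`, the line graph of the coercion of any subgraph is a clique. -/
lemma coe_line_clique (z : V) (hz : ∀ ed ∈ G.edgeSet, z ∈ ed) (H : G.Subgraph)
    (e f : H.coe.edgeSet) (hne : e ≠ f) : H.coe.lineGraph.Adj e f := by
  have he := subgraph_edge_mem H e.1 e.2
  have hf := subgraph_edge_mem H f.1 f.2
  obtain ⟨ze, hze, hze2⟩ := Sym2.mem_map.1 (hz _ he)
  obtain ⟨zf, hzf, hzf2⟩ := Sym2.mem_map.1 (hz _ hf)
  have : ze = zf := Subtype.ext (hze2.trans hzf2.symm)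
  refine (SimpleGraph.lineGraph_adj_iff_exists).2 ⟨hne, ze, hze, this ▸ hzf⟩

/-- `G` line graph is a clique if every edge contains `z`. -/
lemma line_clique (z : V) (hz : ∀ ed ∈ G.edgeSet, z ∈ ed)
    (e f : G.edgeSet) (hne : e ≠ f) : G.lineGraph.Adj e f := by
  exact (SimpleGraph.lineGraph_adj_iff_exists).2 ⟨hne, z, hz _ e.2, hz _ f.2⟩

end LineTransfer


section Subgraphs
open SimpleGraph
variable {V : Type} [Fintype V] {G : SimpleGraph V}

set_option linter.unusedSectionVars false

lemma subgraph_edge_mem' (H : G.Subgraph) (e : Sym2 H.verts) (he : e ∈ H.coe.edgeSet) :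
    Sym2.map Subtype.val e ∈ H.edgeSet := by
  induction e with
  | _ a b =>
    rw [SimpleGraph.mem_edgeSet] at he
    rw [Sym2.map_pair_eq, SimpleGraph.Subgraph.mem_edgeSet]
    exact (H.coe_adj a b) ▸ he

/-- generalization of coe_line_clique : if every edge of `H` contains `z`. -/
lemma coe_line_clique' (z : V) (H : G.Subgraph) (hz : ∀ ed ∈ H.edgeSet, z ∈ ed)
    (e f : H.coe.edgeSet) (hne : e ≠ f) : H.coe.lineGraph.Adj e f := by
  have he := subgraph_edge_mem' H e.1 e.2
  have hf := subgraph_edge_mem' H f.1 f.2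
  obtain ⟨ze, hze, hze2⟩ := Sym2.mem_map.1 (hz _ he)
  obtain ⟨zf, hzf, hzf2⟩ := Sym2.mem_map.1 (hz _ hf)
  have : ze = zf := Subtype.ext (hze2.trans hzf2.symm)
  exact (SimpleGraph.lineGraph_adj_iff_exists).2 ⟨hne, ze, hze, this ▸ hzf⟩

noncomputable def coeEdgeEquiv (H : G.Subgraph) : H.coe.edgeSet ≃ H.edgeSet := by
  refine Equiv.ofBijective (fun e => ⟨Sym2.map Subtype.val e.1, subgraph_edge_mem' H e.1 e.2⟩)
    ⟨?_, ?_⟩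
  · intro e f hef
    have := congrArg Subtype.val hef
    simp only at this
    exact Subtype.ext (Sym2.map.injective Subtype.val_injective this)
  · rintro ⟨ed, hed⟩
    induction ed with
    | _ a b =>
      rw [SimpleGraph.Subgraph.mem_edgeSet] at hed
      refine ⟨⟨s(⟨a, H.edge_vert hed⟩, ⟨b, H.edge_vert hed.symm⟩), ?_⟩, ?_⟩
      · rw [SimpleGraph.mem_edgeSet, SimpleGraph.Subgraph.coe_adj]
        exact hed
      · apply Subtype.ext
        simp [Sym2.map_pair_eq]

lemma card_coe_edgeSet (H : G.Subgraph) :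
    Fintype.card H.coe.edgeSet = Fintype.card H.edgeSet :=
  Fintype.card_congr (coeEdgeEquiv H)

lemma edgeSet_ssubset_of_ne_top (H : G.Subgraph) (hne : H ≠ ⊤)
    (hcov : ∀ x : V, ∃ ed ∈ G.edgeSet, x ∈ ed) : H.edgeSet ⊂ G.edgeSet := by
  refine lt_of_le_of_ne H.edgeSet_subset ?_
  intro heq
  apply hne
  have hadj : ∀ a b, H.Adj a b ↔ G.Adj a b := by
    intro a b
    constructor
    · exact H.adj_sub
    · intro h
      rw [← SimpleGraph.Subgraph.mem_edgeSet, heq, SimpleGraph.mem_edgeSet]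
      exact h
  refine SimpleGraph.Subgraph.ext ?_ ?_
  · rw [SimpleGraph.Subgraph.verts_top]
    apply Set.eq_univ_of_forall
    intro x
    obtain ⟨ed, hed, hx⟩ := hcov x
    rw [← heq] at hed
    induction ed with
    | _ a b =>
      rw [SimpleGraph.Subgraph.mem_edgeSet] at hed
      rcases Sym2.mem_iff.1 hx with rfl | rfl
      · exact H.edge_vert hed
      · exact H.edge_vert hed.symm
  · ext a b
    rw [hadj, SimpleGraph.Subgraph.top_adj]

noncomputable instance fintypeSetV (s : Set V) : Fintype s := Fintype.ofFinite _

lemma card_irrel {X : Type} (i1 i2 : Fintype X) : @Fintype.card X i1 = @Fintype.card X i2 := by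
  congr 1
  exact Subsingleton.elim _ _

/-- number of neighbors. -/
noncomputable def ndeg (G : SimpleGraph V) (u : V) : ℕ := Fintype.card (G.neighborSet u)

/-- The star subgraph at `u`. -/
def starSub (G : SimpleGraph V) (u : V) : G.Subgraph where
  verts := insert u (G.neighborSet u)
  Adj a b := G.Adj a b ∧ (a = u ∨ b = u)
  adj_sub h := h.1
  edge_vert := by
    rintro a b ⟨hab, rfl | rfl⟩
    · exact Set.mem_insert _ _
    · exact Set.mem_insert_of_mem _ hab.symm
  symm := by
    constructor
    rintro a b ⟨hab, h⟩
    exact ⟨hab.symm, h.symm⟩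

lemma starSub_edgeSet (u : V) : (starSub G u).edgeSet = G.incidenceSet u := by
  ext ed
  induction ed with
  | _ a b =>
    rw [SimpleGraph.Subgraph.mem_edgeSet]
    constructor
    · rintro ⟨hab, rfl | rfl⟩
      · exact ⟨hab, Sym2.mem_mk_left _ _⟩
      · exact ⟨hab, Sym2.mem_mk_right _ _⟩
    · rintro ⟨hab, hu⟩
      rcases Sym2.mem_iff.1 hu with rfl | rfl
      · exact ⟨hab, Or.inl rfl⟩
      · exact ⟨hab, Or.inr rfl⟩

lemma card_starSub_edgeSet (u : V) :
    Fintype.card (starSub G u).edgeSet = ndeg G u := by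
  rw [starSub_edgeSet]
  classical
  have h := Fintype.card_congr (G.incidenceSetEquivNeighborSet u)
  unfold ndeg
  convert h using 2 <;> exact Subsingleton.elim _ _

lemma starSub_center (u : V) : ∀ ed ∈ (starSub G u).edgeSet, u ∈ ed := by
  intro ed hed
  rw [starSub_edgeSet] at hed
  exact hed.2

lemma lcIndex_starSub (u : V) :
    listChromaticIndex ((starSub G u).coe) = ndeg G u := by
  rw [lcIndex_eq_card_of_clique _ (fun e f hne => coe_line_clique' u _ (starSub_center u) e f hne),
    card_coe_edgeSet, card_starSub_edgeSet]

end Subgraphs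


section BB
variable {E : Type*}

open Finset
open scoped Classical in
/-- Bondy–Boppana–Siegel kernel lemma. -/
lemma BB (Hc : SimpleGraph E) (Dout : E → E → Prop)
    (hker : ∀ S : Finset E, ∃ K, K ⊆ S ∧ (∀ k1 ∈ K, ∀ k2 ∈ K, k1 ≠ k2 → ¬ Hc.Adj k1 k2) ∧
      (∀ e ∈ S, e ∉ K → ∃ f ∈ K, Dout e f)) :
    ∀ (n : ℕ) (T : Finset E) (L : E → Finset ℕ),
    (∑ e ∈ T, (L e).card) = n →
    (∀ e ∈ T, (T.filter (fun f => Dout e f)).card < (L e).card) →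
    ∃ cc : E → ℕ, (∀ e ∈ T, cc e ∈ L e) ∧ ∀ e ∈ T, ∀ f ∈ T, Hc.Adj e f → cc e ≠ cc f := by
  intro n
  induction n using Nat.strong_induction_on with
  | _ n ih =>
    intro T L hsum hlt
    rcases T.eq_empty_or_nonempty with rfl | ⟨e0, he0⟩
    · exact ⟨fun _ => 0, by simp, by simp⟩
    have hLe0 : (L e0).Nonempty := Finset.card_pos.1 (lt_of_le_of_lt (Nat.zero_le _) (hlt e0 he0))
    obtain ⟨α, hα⟩ := hLe0
    set S := T.filter (fun e => α ∈ L e) with hS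
    have he0S : e0 ∈ S := Finset.mem_filter.2 ⟨he0, hα⟩
    obtain ⟨K, hKS, hKind, hKdom⟩ := hker S
    have hKT : K ⊆ T := hKS.trans (Finset.filter_subset _ _)
    have hKne : K.Nonempty := by
      by_contra h
      rw [Finset.not_nonempty_iff_eq_empty] at h
      obtain ⟨f, hf, _⟩ := hKdom e0 he0S (by simp [h])
      simp [h] at hf
    set T' := T \ K with hT'
    set L' := fun e => (L e).erase α with hL'def
    have hsum' : (∑ e ∈ T', (L' e).card) < n := by
      have h1 : (∑ e ∈ T', (L' e).card) ≤ ∑ e ∈ T', (L e).card := by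
        apply Finset.sum_le_sum
        intro i _
        exact Finset.card_le_card (Finset.erase_subset _ _)
      have h2 : (∑ e ∈ T', (L e).card) + (∑ e ∈ K, (L e).card) = ∑ e ∈ T, (L e).card :=
        Finset.sum_sdiff hKT
      obtain ⟨k0, hk0⟩ := hKne
      have h3 : 0 < (L k0).card :=
        lt_of_le_of_lt (Nat.zero_le _) (hlt k0 (hKT hk0))
      have h4 : 0 < ∑ e ∈ K, (L e).card :=
        lt_of_lt_of_le h3 (Finset.single_le_sum (f := fun e => (L e).card) (fun i _ => Nat.zero_le _) hk0)
      omega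
    have hlt' : ∀ e ∈ T', (T'.filter (fun f => Dout e f)).card < (L' e).card := by
      intro e he
      rw [Finset.mem_sdiff] at he
      by_cases hcase : e ∈ S
      · obtain ⟨f0, hf0K, hf0d⟩ := hKdom e hcase he.2
        have hsub : T'.filter (fun f => Dout e f) ⊆ (T.filter (fun f => Dout e f)).erase f0 := by
          intro g hg
          rw [Finset.mem_filter, Finset.mem_sdiff] at hg
          refine Finset.mem_erase.2 ⟨?_, Finset.mem_filter.2 ⟨hg.1.1, hg.2⟩⟩
          rintro rfl; exact hg.1.2 hf0K
        have hf0T : f0 ∈ T.filter (fun f => Dout e f) := Finset.mem_filter.2 ⟨hKT hf0K, hf0d⟩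
        have h1 := Finset.card_le_card hsub
        rw [Finset.card_erase_of_mem hf0T] at h1
        have h2 := hlt e he.1
        have h3 : α ∈ L e := (Finset.mem_filter.1 hcase).2
        have h4 : (L' e).card = (L e).card - 1 := Finset.card_erase_of_mem h3
        have h5 : 0 < (T.filter (fun f => Dout e f)).card := Finset.card_pos.2 ⟨f0, hf0T⟩
        omega
      · have hnα : α ∉ L e := fun hc => hcase (Finset.mem_filter.2 ⟨he.1, hc⟩)
        have h4 : (L' e).card = (L e).card := by
          simp only [hL'def]
          rw [Finset.erase_eq_of_notMem hnα]
        have hsub : T'.filter (fun f => Dout e f) ⊆ T.filter (fun f => Dout e f) :=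
          Finset.filter_subset_filter _ (Finset.sdiff_subset)
        have := Finset.card_le_card hsub
        have := hlt e he.1
        omega
    obtain ⟨cc', hcc1, hcc2⟩ := ih _ hsum' T' L' rfl hlt'
    refine ⟨fun e => if e ∈ K then α else cc' e, ?_, ?_⟩
    · intro e he
      by_cases hK : e ∈ K
      · simp only [if_pos hK]
        exact (Finset.mem_filter.1 (hKS hK)).2
      · simp only [if_neg hK]
        exact Finset.erase_subset _ _ (hcc1 e (Finset.mem_sdiff.2 ⟨he, hK⟩))
    · intro e he f hf hadj
      have hef : e ≠ f := Hc.ne_of_adj hadj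
      by_cases heK : e ∈ K <;> by_cases hfK : f ∈ K
      · exact absurd hadj (hKind e heK f hfK hef)
      · simp only [if_pos heK, if_neg hfK]
        have := hcc1 f (Finset.mem_sdiff.2 ⟨hf, hfK⟩)
        exact fun hc => (Finset.ne_of_mem_erase this) hc.symm
      · simp only [if_neg heK, if_pos hfK]
        exact Finset.ne_of_mem_erase (hcc1 e (Finset.mem_sdiff.2 ⟨he, heK⟩))
      · simp only [if_neg heK, if_neg hfK]
        exact hcc2 e (Finset.mem_sdiff.2 ⟨he, heK⟩) f (Finset.mem_sdiff.2 ⟨hf, hfK⟩) hadj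
end BB


section Galvin
open SimpleGraph Finset
open scoped Classical

variable {V : Type} [Fintype V] {G : SimpleGraph V}

set_option linter.unusedSectionVars false

lemma fin2_cases (x : Fin 2) : x = 0 ∨ x = 1 := by fin_cases x <;> simp

variable (c : V → Fin 2) (hc : ∀ ⦃a b⦄, G.Adj a b → c a ≠ c b)
include hc

lemma exists_v01 (e : G.edgeSet) : ∃ p : V × V, e.1 = s(p.1, p.2) ∧ c p.1 = 0 ∧ c p.2 = 1 := by
  obtain ⟨ed, hed⟩ := e
  induction ed with
  | _ a b =>
    rw [SimpleGraph.mem_edgeSet] at hed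
    have hab := hc hed
    rcases fin2_cases (c a) with h0 | h1
    · exact ⟨(a, b), rfl, h0, (fin2_cases (c b)).resolve_left (fun h => hab (h0.trans h.symm))⟩
    · exact ⟨(b, a), Sym2.eq_swap,
        (fin2_cases (c b)).resolve_right (fun h => hab (h1.trans h.symm)), h1⟩

noncomputable def vpair (e : G.edgeSet) : V × V := Classical.choose (exists_v01 c hc e)

noncomputable def v0 (e : G.edgeSet) : V := (vpair c hc e).1
noncomputable def v1 (e : G.edgeSet) : V := (vpair c hc e).2

lemma v01_spec (e : G.edgeSet) :
    e.1 = s(v0 c hc e, v1 c hc e) ∧ c (v0 c hc e) = 0 ∧ c (v1 c hc e) = 1 :=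
  Classical.choose_spec (exists_v01 c hc e)

lemma v0_mem (e : G.edgeSet) : v0 c hc e ∈ e.1 := by
  rw [(v01_spec c hc e).1]; exact Sym2.mem_mk_left _ _

lemma v1_mem (e : G.edgeSet) : v1 c hc e ∈ e.1 := by
  rw [(v01_spec c hc e).1]; exact Sym2.mem_mk_right _ _

lemma eq_v0_of_mem {e : G.edgeSet} {w : V} (hw : w ∈ e.1) (h0 : c w = 0) : w = v0 c hc e := by
  have hs := (v01_spec c hc e).1
  rw [hs, Sym2.mem_iff] at hw
  rcases hw with rfl | rfl
  · rfl
  · exact absurd h0 (by rw [(v01_spec c hc e).2.2]; exact one_ne_zero)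

lemma eq_v1_of_mem {e : G.edgeSet} {w : V} (hw : w ∈ e.1) (h1 : c w = 1) : w = v1 c hc e := by
  have hs := (v01_spec c hc e).1
  rw [hs, Sym2.mem_iff] at hw
  rcases hw with rfl | rfl
  · exact absurd h1 (by rw [(v01_spec c hc e).2.1]; exact zero_ne_one)
  · rfl

lemma shared_v01 {e f : G.edgeSet} (h : G.lineGraph.Adj e f) :
    v0 c hc e = v0 c hc f ∨ v1 c hc e = v1 c hc f := by
  obtain ⟨hne, w, hw1, hw2⟩ := (SimpleGraph.lineGraph_adj_iff_exists).1 h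
  rcases fin2_cases (c w) with h0 | h1
  · exact Or.inl ((eq_v0_of_mem c hc hw1 h0) ▸ (eq_v0_of_mem c hc hw2 h0) ▸ rfl)
  · exact Or.inr ((eq_v1_of_mem c hc hw1 h1) ▸ (eq_v1_of_mem c hc hw2 h1) ▸ rfl)

lemma adj_of_v0 {e f : G.edgeSet} (hne : e ≠ f) (h : v0 c hc e = v0 c hc f) :
    G.lineGraph.Adj e f :=
  (SimpleGraph.lineGraph_adj_iff_exists).2 ⟨hne, v0 c hc e, v0_mem c hc e, h ▸ v0_mem c hc f⟩

lemma adj_of_v1 {e f : G.edgeSet} (hne : e ≠ f) (h : v1 c hc e = v1 c hc f) :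
    G.lineGraph.Adj e f :=
  (SimpleGraph.lineGraph_adj_iff_exists).2 ⟨hne, v1 c hc e, v1_mem c hc e, h ▸ v1_mem c hc f⟩

variable (ψ : Sym2 V → ℕ)

/-- Galvin's orientation of the line graph. -/
def DoutG (e f : G.edgeSet) : Prop :=
  (v0 c hc e = v0 c hc f ∧ ψ f.1 < ψ e.1) ∨ (v1 c hc e = v1 c hc f ∧ ψ e.1 < ψ f.1)

variable (hψ : ∀ ed1 ∈ G.edgeSet, ∀ ed2 ∈ G.edgeSet, ed1 ≠ ed2 →
    (∃ w, w ∈ ed1 ∧ w ∈ ed2) → ψ ed1 ≠ ψ ed2)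

include hψ

lemma psi_ne_of_v0 {e f : G.edgeSet} (hne : e ≠ f) (h : v0 c hc e = v0 c hc f) :
    ψ e.1 ≠ ψ f.1 :=
  hψ e.1 e.2 f.1 f.2 (fun hx => hne (Subtype.ext hx))
    ⟨v0 c hc e, v0_mem c hc e, h ▸ v0_mem c hc f⟩

lemma psi_ne_of_v1 {e f : G.edgeSet} (hne : e ≠ f) (h : v1 c hc e = v1 c hc f) :
    ψ e.1 ≠ ψ f.1 :=
  hψ e.1 e.2 f.1 f.2 (fun hx => hne (Subtype.ext hx))
    ⟨v1 c hc e, v1_mem c hc e, h ▸ v1_mem c hc f⟩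

/-- Stable matching construction: kernels exist in every induced subdigraph. -/
lemma galvin_kernel : ∀ S : Finset G.edgeSet, ∃ K, K ⊆ S ∧
    (∀ k1 ∈ K, ∀ k2 ∈ K, k1 ≠ k2 → ¬ G.lineGraph.Adj k1 k2) ∧
    (∀ e ∈ S, e ∉ K → ∃ f ∈ K, DoutG c hc ψ e f) := by
  intro S
  -- deferred acceptance by strong induction on the number of unrejected edges
  suffices h : ∀ (m : ℕ) (R : Finset G.edgeSet), R ⊆ S → (S \ R).card ≤ m →
      (∀ e ∈ R, ∃ f ∈ (S \ R).filter
          (fun e' => ∀ f' ∈ S \ R, v0 c hc f' = v0 c hc e' → ψ e'.1 ≤ ψ f'.1),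
        v1 c hc f = v1 c hc e ∧ ψ e.1 < ψ f.1) →
      ∃ K, K ⊆ S ∧
      (∀ k1 ∈ K, ∀ k2 ∈ K, k1 ≠ k2 → ¬ G.lineGraph.Adj k1 k2) ∧
      (∀ e ∈ S, e ∉ K → ∃ f ∈ K, DoutG c hc ψ e f) by
    exact h (S \ ∅).card ∅ (Finset.empty_subset _) le_rfl (by simp)
  intro m
  induction m with
  | zero =>
    intro R hRS hcard hinv
    -- S \ R is empty, so K := ∅ works? no: dominate R-edges: P-set is empty so invariant gives False
    have hSR : S \ R = ∅ := Finset.card_eq_zero.1 (Nat.le_zero.1 hcard)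
    refine ⟨∅, Finset.empty_subset _, by simp, ?_⟩
    intro e heS heK
    by_cases heR : e ∈ R
    · obtain ⟨f, hf, -⟩ := hinv e heR
      rw [hSR] at hf
      simp at hf
    · exact absurd (Finset.mem_sdiff.2 ⟨heS, heR⟩) (by rw [hSR]; simp)
  | succ m ih =>
    intro R hRS hcard hinv
    set PS := (S \ R).filter
      (fun e' => ∀ f' ∈ S \ R, v0 c hc f' = v0 c hc e' → ψ e'.1 ≤ ψ f'.1) with hPS
    set AS := PS.filter (fun e => ∀ f ∈ PS, v1 c hc f = v1 c hc e → ψ f.1 ≤ ψ e.1) with hAS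
    -- (a) each e ∈ S \ R has a P-edge at its v0 with smaller-or-equal ψ
    have hamin : ∀ e ∈ S \ R, ∃ f ∈ PS, v0 c hc f = v0 c hc e ∧ ψ f.1 ≤ ψ e.1 := by
      intro e he
      have hMne : ((S \ R).filter (fun f => v0 c hc f = v0 c hc e)).Nonempty :=
        ⟨e, Finset.mem_filter.2 ⟨he, rfl⟩⟩
      obtain ⟨f, hfM, hfmin⟩ := Finset.exists_min_image _ (fun f => ψ f.1) hMne
      rw [Finset.mem_filter] at hfM
      refine ⟨f, Finset.mem_filter.2 ⟨hfM.1, ?_⟩, hfM.2, hfmin e (Finset.mem_filter.2 ⟨he, rfl⟩)⟩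
      intro f' hf' hv0
      exact hfmin f' (Finset.mem_filter.2 ⟨hf', hv0.trans hfM.2⟩)
    -- (b) each e ∈ PS has an A-edge at its v1 with larger-or-equal ψ
    have hbmax : ∀ e ∈ PS, ∃ f ∈ AS, v1 c hc f = v1 c hc e ∧ ψ e.1 ≤ ψ f.1 := by
      intro e he
      have hMne : (PS.filter (fun f => v1 c hc f = v1 c hc e)).Nonempty :=
        ⟨e, Finset.mem_filter.2 ⟨he, rfl⟩⟩
      obtain ⟨f, hfM, hfmax⟩ := Finset.exists_max_image _ (fun f => ψ f.1) hMne
      rw [Finset.mem_filter] at hfM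
      refine ⟨f, Finset.mem_filter.2 ⟨hfM.1, ?_⟩, hfM.2, hfmax e (Finset.mem_filter.2 ⟨he, rfl⟩)⟩
      intro f' hf' hv1
      exact hfmax f' (Finset.mem_filter.2 ⟨hf', hv1.trans hfM.2⟩)
    by_cases hPA : PS ⊆ AS
    · -- terminal state: K := PS
      refine ⟨PS, (Finset.filter_subset _ _).trans Finset.sdiff_subset, ?_, ?_⟩
      · intro k1 hk1 k2 hk2 hne hadj
        rcases shared_v01 c hc hadj with h0 | h1
        · have h12 := (Finset.mem_filter.1 hk1).2 k2 (Finset.mem_filter.1 hk2).1 h0.symm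
          have h21 := (Finset.mem_filter.1 hk2).2 k1 (Finset.mem_filter.1 hk1).1 h0
          exact psi_ne_of_v0 c hc ψ hψ hne h0 (le_antisymm h12 h21)
        · have hk1' := Finset.mem_filter.1 (hPA hk1)
          have hk2' := Finset.mem_filter.1 (hPA hk2)
          have h12 := hk1'.2 k2 hk2'.1 h1.symm
          have h21 := hk2'.2 k1 hk1'.1 h1
          exact psi_ne_of_v1 c hc ψ hψ hne h1 (le_antisymm h21 h12)
      · intro e heS heK
        by_cases heR : e ∈ R
        · obtain ⟨f, hf, hv1, hlt⟩ := hinv e heR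
          exact ⟨f, hf, Or.inr ⟨hv1.symm, hlt⟩⟩
        · have heSR : e ∈ S \ R := Finset.mem_sdiff.2 ⟨heS, heR⟩
          obtain ⟨f, hfP, hv0, hle⟩ := hamin e heSR
          have hne : e ≠ f := fun h => heK (h ▸ hfP)
          have hstrict : ψ f.1 < ψ e.1 :=
            lt_of_le_of_ne hle (psi_ne_of_v0 c hc ψ hψ (Ne.symm hne) hv0)
          exact ⟨f, hfP, Or.inl ⟨hv0.symm, hstrict⟩⟩
    · -- some proposal is rejected; recurse
      obtain ⟨g, hgP, hgA⟩ := Finset.not_subset.1 hPA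
      set R' := R ∪ (PS \ AS) with hR'
      have hR'S : R' ⊆ S := by
        rw [hR']
        apply Finset.union_subset hRS
        exact (Finset.sdiff_subset).trans ((Finset.filter_subset _ _).trans Finset.sdiff_subset)
      have hSR'sub : S \ R' ⊆ S \ R := by
        apply Finset.sdiff_subset_sdiff le_rfl
        rw [hR']; exact Finset.subset_union_left
      have hgSR : g ∈ S \ R := (Finset.filter_subset _ _) hgP
      have hgR' : g ∈ R' := by
        rw [hR']; exact Finset.mem_union_right _ (Finset.mem_sdiff.2 ⟨hgP, hgA⟩)
      have hcard' : (S \ R').card < (S \ R).card := by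
        apply Finset.card_lt_card
        refine ⟨hSR'sub, fun hsub => ?_⟩
        have := hsub hgSR
        rw [Finset.mem_sdiff] at this
        exact this.2 hgR'
      -- A-edges remain proposals after more rejections
      have hAP' : ∀ f ∈ AS, f ∈ (S \ R').filter
          (fun e' => ∀ f' ∈ S \ R', v0 c hc f' = v0 c hc e' → ψ e'.1 ≤ ψ f'.1) := by
        intro f hf
        have hfP := (Finset.mem_filter.1 hf).1
        have hfSR := (Finset.mem_filter.1 hfP).1
        refine Finset.mem_filter.2 ⟨?_, ?_⟩
        · rw [Finset.mem_sdiff] at hfSR ⊢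
          refine ⟨hfSR.1, ?_⟩
          rw [hR', Finset.mem_union]
          rintro (h | h)
          · exact hfSR.2 h
          · exact (Finset.mem_sdiff.1 h).2 hf
        · intro f' hf' hv0
          exact (Finset.mem_filter.1 hfP).2 f' (hSR'sub hf') hv0
      have hinv' : ∀ e ∈ R', ∃ f ∈ (S \ R').filter
          (fun e' => ∀ f' ∈ S \ R', v0 c hc f' = v0 c hc e' → ψ e'.1 ≤ ψ f'.1),
          v1 c hc f = v1 c hc e ∧ ψ e.1 < ψ f.1 := by
        intro e heR'
        rw [hR', Finset.mem_union] at heR'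
        rcases heR' with heR | heNew
        · obtain ⟨f, hfP, hv1, hlt⟩ := hinv e heR
          obtain ⟨f'', hf''A, hv1'', hle''⟩ := hbmax f hfP
          exact ⟨f'', hAP' f'' hf''A, hv1''.trans hv1, lt_of_lt_of_le hlt hle''⟩
        · rw [Finset.mem_sdiff] at heNew
          obtain ⟨heP, heA⟩ := heNew
          rw [hAS, Finset.mem_filter, not_and] at heA
          have := heA heP
          push_neg at this
          obtain ⟨f', hf'P, hv1', hlt'⟩ := this
          obtain ⟨f'', hf''A, hv1'', hle''⟩ := hbmax f' hf'P
          exact ⟨f'', hAP' f'' hf''A, hv1''.trans hv1', lt_of_lt_of_le hlt' hle''⟩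
      exact ih R' hR'S (by omega) hinv'
lemma galvin_choosable (N : ℕ) (hrange : ∀ ed ∈ G.edgeSet, ψ ed ∈ Finset.range N) :
    Choosable G.lineGraph N := by
  intro L hL
  have hbound : ∀ e ∈ (Finset.univ : Finset G.edgeSet),
      ((Finset.univ : Finset G.edgeSet).filter (fun f => DoutG c hc ψ e f)).card < (L e).card := by
    intro e _
    rw [hL e]
    have hmem : ∀ f ∈ (Finset.univ : Finset G.edgeSet).filter (fun f => DoutG c hc ψ e f),
        ψ f.1 ∈ (Finset.range N).erase (ψ e.1) := by
      intro f hf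
      have hd := (Finset.mem_filter.1 hf).2
      refine Finset.mem_erase.2 ⟨?_, hrange f.1 f.2⟩
      rcases hd with ⟨_, hlt⟩ | ⟨_, hlt⟩ <;> omega
    have hinj : Set.InjOn (fun f : G.edgeSet => ψ f.1)
        ((Finset.univ : Finset G.edgeSet).filter (fun f => DoutG c hc ψ e f)) := by
      intro f hf g hg hfg
      simp only [Finset.coe_filter, Set.mem_setOf_eq] at hf hg
      by_contra hne
      have hfg' : ψ f.1 = ψ g.1 := hfg
      rcases hf.2 with ⟨h0f, hltf⟩ | ⟨h1f, hltf⟩ <;> rcases hg.2 with ⟨h0g, hltg⟩ | ⟨h1g, hltg⟩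
      · exact psi_ne_of_v0 c hc ψ hψ hne (h0f.symm.trans h0g) hfg
      · omega
      · omega
      · exact psi_ne_of_v1 c hc ψ hψ hne (h1f.symm.trans h1g) hfg
    have hcard := Finset.card_le_card_of_injOn _ hmem hinj
    have hNe : ψ e.1 ∈ Finset.range N := hrange e.1 e.2
    have hN : 0 < N := by
      rw [Finset.mem_range] at hNe; omega
    rw [Finset.card_erase_of_mem hNe, Finset.card_range] at hcard
    omega
  obtain ⟨cc, hcc1, hcc2⟩ := BB G.lineGraph (DoutG c hc ψ) (galvin_kernel c hc ψ hψ)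
    _ Finset.univ L rfl hbound
  exact ⟨cc, fun a b hadj => hcc2 a (Finset.mem_univ _) b (Finset.mem_univ _) hadj,
    fun e => hcc1 e (Finset.mem_univ _)⟩

end Galvin


section Kempe
open SimpleGraph Finset
open scoped Classical

variable {V : Type} [Fintype V] {G : SimpleGraph V}

set_option linter.unusedSectionVars false
set_option maxHeartbeats 1000000

lemma fin2_ne_ne {a b d : Fin 2} (h1 : a ≠ b) (h2 : a ≠ d) : b = d := by
  fin_cases a <;> fin_cases b <;> fin_cases d <;> simp_all

lemma card_usedAt (x : V) : ((G.incidenceSet x).toFinset).card = ndeg G x := by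
  classical
  rw [Set.toFinset_card]
  have h := Fintype.card_congr (G.incidenceSetEquivNeighborSet x)
  unfold ndeg
  convert h using 2 <;> exact Subsingleton.elim _ _

/-- The Kempe chain subgraph with colors α, β avoiding edge `e`. -/
def chainG (G : SimpleGraph V) (ψ : Sym2 V → ℕ) (e : Sym2 V) (α β : ℕ) : SimpleGraph V where
  Adj a b := G.Adj a b ∧ s(a,b) ≠ e ∧ (ψ s(a,b) = α ∨ ψ s(a,b) = β)
  symm := by
    constructor
    intro a b ⟨h1, h2, h3⟩
    rw [Sym2.eq_swap] at h2 h3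
    exact ⟨h1.symm, h2, h3⟩
  loopless := ⟨fun a ⟨h, _⟩ => G.irrefl h⟩

lemma chainG_adj {G : SimpleGraph V} {ψ : Sym2 V → ℕ} {e : Sym2 V} {α β : ℕ} {a b : V} :
    (chainG G ψ e α β).Adj a b ↔
      (G.Adj a b ∧ s(a,b) ≠ e ∧ (ψ s(a,b) = α ∨ ψ s(a,b) = β)) := Iff.rfl

lemma walklem_aux (c : V → Fin 2) (hc : ∀ ⦃a b⦄, G.Adj a b → c a ≠ c b)
    (ψ : Sym2 V → ℕ) (v : V) (e : Sym2 V) (α β : ℕ)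
    (hproper : ∀ ed1 ∈ G.edgeSet, ed1 ≠ e → ∀ ed2 ∈ G.edgeSet, ed2 ≠ e →
      ed1 ≠ ed2 → (∃ w, w ∈ ed1 ∧ w ∈ ed2) → ψ ed1 ≠ ψ ed2)
    (hβprop : ∀ ed ∈ G.edgeSet, ed ≠ e → v ∈ ed → ψ ed ≠ β) :
    ∀ {y t : V} (r : (chainG G ψ e α β).Walk y t), t = v →
      ∀ {x : V} (hxy : (chainG G ψ e α β).Adj x y),
      (SimpleGraph.Walk.cons hxy r).IsPath → (ψ s(x,y) = α ↔ c x ≠ c v) := by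
  intro y t r
  induction r with
  | @nil y0 =>
    intro ht x hxy hpath
    rw [ht] at hxy
    rw [ht]
    obtain ⟨hG, hne, hcol⟩ := chainG_adj.1 hxy
    have hnotβ : ψ s(x,v) ≠ β := hβprop _ ((G.mem_edgeSet).2 hG) hne (Sym2.mem_mk_right _ _)
    have hψα : ψ s(x,v) = α := hcol.resolve_right hnotβ
    exact iff_of_true hψα (hc hG)
  | @cons y' z' t' hyz r'' ih =>
    intro ht x hxy hpath
    obtain ⟨hGxy, hnexy, hcolxy⟩ := chainG_adj.1 hxy
    obtain ⟨hGyz, hneyz, hcolyz⟩ := chainG_adj.1 hyz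
    have hpath' : (SimpleGraph.Walk.cons hyz r'').IsPath :=
      ((SimpleGraph.Walk.cons_isPath_iff _ _).1 hpath).1
    have ihz := ih ht hyz hpath'
    have hxz : x ≠ z' := by
      have hxsup : x ∉ (SimpleGraph.Walk.cons hyz r'').support :=
        ((SimpleGraph.Walk.cons_isPath_iff _ _).1 hpath).2
      intro hcon
      apply hxsup
      rw [SimpleGraph.Walk.support_cons, hcon]
      exact List.mem_cons_of_mem _ (SimpleGraph.Walk.start_mem_support r'')
    have hf01 : s(x, y') ≠ s(y', z') := by
      intro hcon
      rw [Sym2.eq_iff] at hcon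
      rcases hcon with ⟨hxy', _⟩ | ⟨hxz', _⟩
      · exact (G.ne_of_adj hGxy) hxy'
      · exact hxz hxz'
    have hnepsi : ψ s(x,y') ≠ ψ s(y',z') :=
      hproper _ ((G.mem_edgeSet).2 hGxy) hnexy _ ((G.mem_edgeSet).2 hGyz) hneyz hf01
        ⟨y', Sym2.mem_mk_right _ _, Sym2.mem_mk_left _ _⟩
    have hcxy := hc hGxy
    constructor
    · intro h0
      have h1 : ψ s(y',z') ≠ α := fun hcon => hnepsi (h0.trans hcon.symm)
      have h2 : ¬ (c y' ≠ c v) := fun hcon => h1 (ihz.2 hcon)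
      have h3 : c y' = c v := not_not.1 h2
      rw [← h3]
      exact hcxy
    · intro h0
      by_contra hψ0
      have hψβ : ψ s(x,y') = β := hcolxy.resolve_left hψ0
      have h3 : c y' = c v := fin2_ne_ne hcxy h0
      have h4 : ψ s(y',z') ≠ α := fun hcon => (ihz.1 hcon) h3
      have h5 : ψ s(y',z') = β := hcolyz.resolve_left h4
      exact hnepsi (hψβ.trans h5.symm)

lemma kempe (c : V → Fin 2) (hc : ∀ ⦃a b⦄, G.Adj a b → c a ≠ c b)
    (N : ℕ) (hdeg : ∀ x : V, ndeg G x ≤ N)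
    (u v : V) (huv : G.Adj u v)
    (ψ : Sym2 V → ℕ)
    (hrange : ∀ ed ∈ G.edgeSet, ed ≠ s(u,v) → ψ ed ∈ Finset.range N)
    (hproper : ∀ ed1 ∈ G.edgeSet, ed1 ≠ s(u,v) → ∀ ed2 ∈ G.edgeSet, ed2 ≠ s(u,v) →
      ed1 ≠ ed2 → (∃ w, w ∈ ed1 ∧ w ∈ ed2) → ψ ed1 ≠ ψ ed2) :
    ∃ ψ' : Sym2 V → ℕ, (∀ ed ∈ G.edgeSet, ψ' ed ∈ Finset.range N) ∧
      (∀ ed1 ∈ G.edgeSet, ∀ ed2 ∈ G.edgeSet, ed1 ≠ ed2 → (∃ w, w ∈ ed1 ∧ w ∈ ed2) →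
        ψ' ed1 ≠ ψ' ed2) := by
  classical
  set e : Sym2 V := s(u,v) with he
  -- missing colors at u and at v
  have hmiss : ∀ x, x ∈ e → ∃ γ ∈ Finset.range N,
      ∀ ed ∈ G.edgeSet, ed ≠ e → x ∈ ed → ψ ed ≠ γ := by
    intro x hx
    have heInc : e ∈ (G.incidenceSet x).toFinset := by
      rw [Set.mem_toFinset]
      exact ⟨(G.mem_edgeSet).2 huv, hx⟩
    have hcard : (((G.incidenceSet x).toFinset.erase e).image ψ).card < N := by
      calc (((G.incidenceSet x).toFinset.erase e).image ψ).card
          ≤ ((G.incidenceSet x).toFinset.erase e).card := Finset.card_image_le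
        _ = ((G.incidenceSet x).toFinset).card - 1 := Finset.card_erase_of_mem heInc
        _ < N := by
            have h1 := card_usedAt (G := G) x
            have h2 := hdeg x
            have h3 : 0 < ((G.incidenceSet x).toFinset).card := Finset.card_pos.2 ⟨e, heInc⟩
            omega
    have hne : (Finset.range N \ ((G.incidenceSet x).toFinset.erase e).image ψ).Nonempty := by
      rw [← Finset.card_pos]
      have := Finset.le_card_sdiff (((G.incidenceSet x).toFinset.erase e).image ψ) (Finset.range N)
      rw [Finset.card_range] at this
      omega
    obtain ⟨γ, hγ⟩ := hne
    rw [Finset.mem_sdiff] at hγ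
    refine ⟨γ, hγ.1, ?_⟩
    intro ed hed hedne hxed hcontra
    apply hγ.2
    apply Finset.mem_image.2
    exact ⟨ed, Finset.mem_erase.2 ⟨hedne, Set.mem_toFinset.2 ⟨hed, hxed⟩⟩, hcontra⟩
  obtain ⟨α, hαr, hαprop⟩ := hmiss u (Sym2.mem_mk_left _ _)
  obtain ⟨β, hβr, hβprop⟩ := hmiss v (Sym2.mem_mk_right _ _)
  by_cases hab : α = β
  · -- extend directly
    refine ⟨fun ed => if ed = e then α else ψ ed, ?_, ?_⟩
    · intro ed hed
      by_cases h : ed = e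
      · simp only [if_pos h]; exact hαr
      · simp only [if_neg h]; exact hrange ed hed h
    · intro ed1 hed1 ed2 hed2 hne12 ⟨w, hw1, hw2⟩
      by_cases h1 : ed1 = e <;> by_cases h2 : ed2 = e
      · exact absurd (h1.trans h2.symm) hne12
      · simp only [if_pos h1, if_neg h2]
        subst h1
        rcases Sym2.mem_iff.1 hw1 with rfl | rfl
        · exact fun hcon => hαprop ed2 hed2 h2 hw2 hcon.symm
        · exact fun hcon => hβprop ed2 hed2 h2 hw2 (hcon.symm.trans hab)
      · simp only [if_neg h1, if_pos h2]
        subst h2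
        rcases Sym2.mem_iff.1 hw2 with rfl | rfl
        · exact fun hcon => hαprop ed1 hed1 h1 hw1 hcon
        · exact fun hcon => hβprop ed1 hed1 h1 hw1 (hcon.trans hab)
      · simp only [if_neg h1, if_neg h2]
        exact hproper ed1 hed1 h1 ed2 hed2 h2 hne12 ⟨w, hw1, hw2⟩
  · -- Kempe chain swap
    set D : SimpleGraph V := chainG G ψ e α β with hD
    have hDadj : ∀ {a b}, D.Adj a b ↔
        (G.Adj a b ∧ s(a,b) ≠ e ∧ (ψ s(a,b) = α ∨ ψ s(a,b) = β)) := chainG_adj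
    set R : Set V := {w | D.Reachable v w} with hR
    have hvR : v ∈ R := Set.mem_setOf.2 (SimpleGraph.Reachable.refl v)
    have hRclosed : ∀ {a b}, D.Adj a b → a ∈ R → b ∈ R := by
      intro a b hadj ha
      exact Set.mem_setOf.2 ((Set.mem_setOf.1 ha).trans hadj.reachable)
    -- u is not reachable from v in D
    have huR : u ∉ R := by
      intro hu
      obtain ⟨w⟩ := Set.mem_setOf.1 hu
      have hp : (w.bypass).IsPath := SimpleGraph.Walk.bypass_isPath w
      have hpr_path : ((w.bypass).reverse).IsPath := hp.reverse
      cases hprc : (w.bypass).reverse with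
      | nil => exact G.irrefl huv
      | cons hadj r =>
        rename_i y'
        rw [hprc] at hpr_path
        have := (walklem_aux c hc ψ v e α β hproper hβprop r rfl hadj hpr_path).2 (hc huv)
        obtain ⟨hG', hne', _⟩ := hDadj.1 hadj
        exact hαprop _ ((G.mem_edgeSet).2 hG') hne' (Sym2.mem_mk_left _ _) this
    -- the color swap on the chain component of v
    set swp : ℕ → ℕ := fun γ => if γ = α then β else if γ = β then α else γ with hswp
    have hswpα : swp α = β := by simp [hswp]
    have hswpβ : swp β = α := by simp [hswp, Ne.symm hab]
    have hswp_inj : Function.Injective swp := by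
      intro a b h
      simp only [hswp] at h
      split_ifs at h <;> omega
    set cond : Sym2 V → Prop :=
      fun f => f ∈ G.edgeSet ∧ f ≠ e ∧ (ψ f = α ∨ ψ f = β) ∧ (∃ w ∈ f, w ∈ R) with hcond
    have hcondIff : ∀ f, cond f ↔
        (f ∈ G.edgeSet ∧ f ≠ e ∧ (ψ f = α ∨ ψ f = β) ∧ (∃ w ∈ f, w ∈ R)) := by
      intro f; rw [hcond]
    have hcond_closed : ∀ f, cond f → ∀ w ∈ f, w ∈ R := by
      intro f
      induction f with
      | _ a b =>
        intro hf w hw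
        obtain ⟨hfE, hfne, hfcol, w0, hw0f, hw0R⟩ := (hcondIff _).1 hf
        have hDab : D.Adj a b := hDadj.2 ⟨(G.mem_edgeSet).1 hfE, hfne, hfcol⟩
        rcases Sym2.mem_iff.1 hw with rfl | rfl <;> rcases Sym2.mem_iff.1 hw0f with rfl | rfl
        · exact hw0R
        · exact hRclosed hDab.symm hw0R
        · exact hRclosed hDab hw0R
        · exact hw0R
    set ψ2 : Sym2 V → ℕ := fun f => if cond f then swp (ψ f) else ψ f with hψ2
    have hψ2_eq : ∀ f, ψ2 f = if cond f then swp (ψ f) else ψ f := fun f => by rw [hψ2]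
    have hψ2_range : ∀ f ∈ G.edgeSet, f ≠ e → ψ2 f ∈ Finset.range N := by
      intro f hf hfne
      rw [hψ2_eq]
      by_cases hcf : cond f
      · rw [if_pos hcf]
        rcases ((hcondIff f).1 hcf).2.2.1 with h | h
        · rw [h, hswpα]; exact hβr
        · rw [h, hswpβ]; exact hαr
      · rw [if_neg hcf]; exact hrange f hf hfne
    have hψ2_notab : ∀ f ∈ G.edgeSet, f ≠ e → ¬ cond f → (∃ w ∈ f, w ∈ R) →
        ψ f ≠ α ∧ ψ f ≠ β := by
      intro f hf hfne hcf hwR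
      constructor <;> intro hcol <;>
        exact hcf ((hcondIff f).2 ⟨hf, hfne, by tauto, hwR⟩)
    have hψ2_proper : ∀ f ∈ G.edgeSet, f ≠ e → ∀ g ∈ G.edgeSet, g ≠ e → f ≠ g →
        (∃ w, w ∈ f ∧ w ∈ g) → ψ2 f ≠ ψ2 g := by
      intro f hf hfne g hg hgne hfg ⟨w, hwf, hwg⟩
      rw [hψ2_eq, hψ2_eq]
      by_cases hcf : cond f <;> by_cases hcg : cond g
      · rw [if_pos hcf, if_pos hcg]
        exact fun hcon => hproper f hf hfne g hg hgne hfg ⟨w, hwf, hwg⟩ (hswp_inj hcon)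
      · rw [if_pos hcf, if_neg hcg]
        have hwR : w ∈ R := hcond_closed f hcf w hwf
        have hgnotab := hψ2_notab g hg hgne hcg ⟨w, hwg, hwR⟩
        rcases ((hcondIff f).1 hcf).2.2.1 with h | h
        · rw [h, hswpα]; exact fun hcon => hgnotab.2 hcon.symm
        · rw [h, hswpβ]; exact fun hcon => hgnotab.1 hcon.symm
      · rw [if_neg hcf, if_pos hcg]
        have hwR : w ∈ R := hcond_closed g hcg w hwg
        have hfnotab := hψ2_notab f hf hfne hcf ⟨w, hwf, hwR⟩
        rcases ((hcondIff g).1 hcg).2.2.1 with h | h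
        · rw [h, hswpα]; exact hfnotab.2
        · rw [h, hswpβ]; exact hfnotab.1
      · rw [if_neg hcf, if_neg hcg]
        exact hproper f hf hfne g hg hgne hfg ⟨w, hwf, hwg⟩
    have hψ2_u : ∀ f ∈ G.edgeSet, f ≠ e → u ∈ f → ψ2 f ≠ α := by
      intro f hf hfne huf
      rw [hψ2_eq]
      by_cases hcf : cond f
      · exact absurd (hcond_closed f hcf u huf) huR
      · rw [if_neg hcf]; exact hαprop f hf hfne huf
    have hψ2_v : ∀ f ∈ G.edgeSet, f ≠ e → v ∈ f → ψ2 f ≠ α := by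
      intro f hf hfne hvf
      rw [hψ2_eq]
      by_cases hcf : cond f
      · rw [if_pos hcf]
        have hβne : ψ f ≠ β := hβprop f hf hfne hvf
        have hα : ψ f = α := (((hcondIff f).1 hcf).2.2.1).resolve_right hβne
        rw [hα, hswpα]
        exact Ne.symm hab
      · rw [if_neg hcf]
        intro hcol
        exact hcf ((hcondIff f).2 ⟨hf, hfne, Or.inl hcol, ⟨v, hvf, hvR⟩⟩)
    refine ⟨fun f => if f = e then α else ψ2 f, ?_, ?_⟩
    · intro ed hed
      by_cases h : ed = e
      · simp only [if_pos h]; exact hαr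
      · simp only [if_neg h]; exact hψ2_range ed hed h
    · intro ed1 hed1 ed2 hed2 hne12 ⟨w, hw1, hw2⟩
      by_cases h1 : ed1 = e <;> by_cases h2 : ed2 = e
      · exact absurd (h1.trans h2.symm) hne12
      · simp only [if_pos h1, if_neg h2]
        subst h1
        rcases Sym2.mem_iff.1 hw1 with rfl | rfl
        · exact fun hcon => hψ2_u ed2 hed2 h2 hw2 hcon.symm
        · exact fun hcon => hψ2_v ed2 hed2 h2 hw2 hcon.symm
      · simp only [if_neg h1, if_pos h2]
        subst h2
        rcases Sym2.mem_iff.1 hw2 with rfl | rfl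
        · exact hψ2_u ed1 hed1 h1 hw1
        · exact hψ2_v ed1 hed1 h1 hw1
      · simp only [if_neg h1, if_neg h2]
        exact hψ2_proper ed1 hed1 h1 ed2 hed2 h2 hne12 ⟨w, hw1, hw2⟩
end Kempe


section Main
open SimpleGraph Finset
open scoped Classical

variable {V : Type} [Fintype V] {G : SimpleGraph V}

set_option linter.unusedSectionVars false
set_option maxHeartbeats 1000000

lemma star_implies_critical (hedge : G.edgeSet.Nonempty) {n : ℕ}
    (hiso : G ≃g completeBipartiteGraph (Fin 1) (Fin n)) : EdgeListCritical G := by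
  classical
  set z : V := hiso.symm (Sum.inl 0) with hz
  have hcenter : ∀ ed ∈ G.edgeSet, z ∈ ed := by
    intro ed hed
    induction ed with
    | _ a b =>
      have hab : G.Adj a b := (G.mem_edgeSet).1 hed
      have hab' : (completeBipartiteGraph (Fin 1) (Fin n)).Adj (hiso a) (hiso b) :=
        hiso.map_adj_iff.2 hab
      simp only [completeBipartiteGraph] at hab'
      rcases hab' with ⟨h1, h2⟩ | ⟨h1, h2⟩
      · -- hiso a is left
        have : hiso a = Sum.inl 0 := by
          rcases h : hiso a with i | j
          · rw [Fin.fin_one_eq_zero i]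
          · have := congrArg Sum.isLeft h; exact absurd (h1.symm.trans this) (by simp)
        have ha : a = z := by
          rw [hz, ← this]
          exact (hiso.toEquiv.symm_apply_apply a).symm
        rw [ha]; exact Sym2.mem_mk_left _ _
      · have : hiso b = Sum.inl 0 := by
          rcases h : hiso b with i | j
          · rw [Fin.fin_one_eq_zero i]
          · have := congrArg Sum.isLeft h; exact absurd (h2.symm.trans this) (by simp)
        have hb : b = z := by
          rw [hz, ← this]
          exact (hiso.toEquiv.symm_apply_apply b).symm
        rw [hb]; exact Sym2.mem_mk_right _ _
  have hcov : ∀ x : V, ∃ ed ∈ G.edgeSet, x ∈ ed := by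
    intro x
    rcases h : hiso x with i | j
    · obtain ⟨ed, hed⟩ := hedge
      refine ⟨ed, hed, ?_⟩
      have : x = z := by
        rw [hz, ← Fin.fin_one_eq_zero i, ← h]
        exact (hiso.toEquiv.symm_apply_apply x).symm
      rw [this]; exact hcenter ed hed
    · have hadj : G.Adj z x := by
        rw [← hiso.map_adj_iff]
        have h1 : hiso z = Sum.inl 0 := by
          rw [hz]; exact hiso.toEquiv.apply_symm_apply _
        rw [h1, h]
        simp [completeBipartiteGraph]
      exact ⟨s(z,x), (G.mem_edgeSet).2 hadj, Sym2.mem_mk_right _ _⟩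
  intro H hne
  have h1 : listChromaticIndex H.coe = Fintype.card H.coe.edgeSet := by
    apply lcn_clique
    intro e f hnef
    exact coe_line_clique' z H (fun ed hed => hcenter ed (H.edgeSet_subset hed)) e f hnef
  have h2 : listChromaticIndex G = Fintype.card G.edgeSet := by
    apply lcn_clique
    intro e f hnef
    exact line_clique z hcenter e f hnef
  rw [h1, h2, card_coe_edgeSet]
  exact Set.card_lt_card (edgeSet_ssubset_of_ne_top H hne hcov)
end Main


section Main2
open SimpleGraph Finset
open scoped Classical

variable {V : Type} [Fintype V] {G : SimpleGraph V}

set_option linter.unusedSectionVars false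
set_option maxHeartbeats 1000000

lemma star_iso_of_starSub_top (u : V) (hstar : starSub G u = ⊤) :
    Nonempty (G ≃g completeBipartiteGraph (Fin 1) (Fin (ndeg G u))) := by
  classical
  set n := ndeg G u with hn
  have hverts : ∀ x : V, x ∈ (insert u (G.neighborSet u) : Set V) := by
    intro x
    have := congrArg SimpleGraph.Subgraph.verts hstar
    simp only [SimpleGraph.Subgraph.verts_top] at this
    rw [show (insert u (G.neighborSet u) : Set V) = (starSub G u).verts from rfl, this]
    trivial
  have hedgeu : ∀ a b : V, G.Adj a b → (a = u ∨ b = u) := by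
    intro a b hab
    have h2 : (⊤ : G.Subgraph).Adj a b := SimpleGraph.Subgraph.top_adj.2 hab
    rw [← hstar] at h2
    exact h2.2
  have cii : ∀ (X : Type) (i1 i2 : Fintype X), @Fintype.card X i1 = @Fintype.card X i2 := by
    intro X i1 i2
    congr 1
    exact Subsingleton.elim _ _
  have eN : G.neighborSet u ≃ Fin n := by
    apply Fintype.equivFinOfCardEq
    rw [hn]
    exact cii _ _ _
  have hmemN : ∀ x : V, x ≠ u → x ∈ G.neighborSet u := by
    intro x hx
    rcases Set.mem_insert_iff.1 (hverts x) with h | h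
    · exact absurd h hx
    · exact h
  set f : V → Fin 1 ⊕ Fin n := fun x =>
    if hx : x = u then Sum.inl 0 else Sum.inr (eN ⟨x, hmemN x hx⟩) with hf
  set g : Fin 1 ⊕ Fin n → V := Sum.elim (fun _ => u) (fun j => (eN.symm j).1) with hg
  have hgf : Function.LeftInverse g f := by
    intro x
    by_cases hx : x = u
    · simp only [hf, hg, dif_pos hx]; exact hx.symm
    · simp only [hf, hg, dif_neg hx, Sum.elim_inr]
      rw [Equiv.symm_apply_apply]
  have hfg : Function.RightInverse g f := by
    rintro (i | j)
    · simp only [hf, hg, Sum.elim_inl, dif_pos rfl]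
      rw [Fin.fin_one_eq_zero i]
    · have hne : ((eN.symm j : G.neighborSet u) : V) ≠ u := by
        have hadj : G.Adj u ((eN.symm j : G.neighborSet u) : V) := (eN.symm j).2
        exact fun hcon => (G.ne_of_adj hadj) hcon.symm
      simp only [hf, hg, Sum.elim_inr, dif_neg hne]
      congr
      rw [show (⟨((eN.symm j : G.neighborSet u) : V), hmemN _ hne⟩ : G.neighborSet u)
          = eN.symm j from Subtype.ext rfl]
      rw [Equiv.apply_symm_apply]
  refine ⟨⟨⟨f, g, hgf, hfg⟩, ?_⟩⟩
  · intro a b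
    show (completeBipartiteGraph (Fin 1) (Fin n)).Adj (f a) (f b) ↔ G.Adj a b
    constructor
    · intro h
      by_cases ha : a = u <;> by_cases hb : b = u
      · simp only [hf, ha, hb, dif_pos] at h
        simp [completeBipartiteGraph] at h
      · rw [ha]
        exact ((G.mem_neighborSet u b).1 (hmemN b hb))
      · rw [hb]
        exact ((G.mem_neighborSet u a).1 (hmemN a ha)).symm
      · simp only [hf, dif_neg ha, dif_neg hb] at h
        simp [completeBipartiteGraph] at h
    · intro hab
      rcases hedgeu a b hab with h | h
      · have hub : G.Adj u b := h ▸ hab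
        have hbu : b ≠ u := hub.ne'
        simp only [hf, dif_neg hbu, h, dif_pos]
        simp [completeBipartiteGraph]
      · have hau : G.Adj a u := h ▸ hab
        have hua : a ≠ u := hau.ne
        simp only [hf, dif_neg hua, h, dif_pos]
        simp [completeBipartiteGraph]
end Main2


section Main3
open SimpleGraph Finset
open scoped Classical

variable {V : Type} [Fintype V] {G : SimpleGraph V}

set_option linter.unusedSectionVars false
set_option maxHeartbeats 1000000

/-- The subgraph of `G` with one edge deleted. -/
def delSub (G : SimpleGraph V) (e0 : Sym2 V) : G.Subgraph where
  verts := Set.univ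
  Adj a b := G.Adj a b ∧ s(a,b) ≠ e0
  adj_sub h := h.1
  edge_vert _ := Set.mem_univ _
  symm := by
    constructor
    intro a b ⟨h1, h2⟩
    rw [Sym2.eq_swap] at h2
    exact ⟨h1.symm, h2⟩

lemma delSub_adj {e0 : Sym2 V} {a b : V} :
    (delSub G e0).Adj a b ↔ (G.Adj a b ∧ s(a,b) ≠ e0) := Iff.rfl

lemma critical_implies_star (hbip : G.Colorable 2) (hedge : G.edgeSet.Nonempty)
    (hcrit : EdgeListCritical G) :
    ∃ n : ℕ, Nonempty (G ≃g completeBipartiteGraph (Fin 1) (Fin n)) := by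
  classical
  obtain ⟨u0, v0, hed⟩ : ∃ a b, G.Adj a b := by
    obtain ⟨ed0, hed0⟩ := hedge
    induction ed0 with
    | _ a b => exact ⟨a, b, (G.mem_edgeSet).1 hed0⟩
  obtain ⟨u, -, hmaxu⟩ :=
    Finset.exists_max_image (Finset.univ : Finset V) (ndeg G) ⟨u0, Finset.mem_univ _⟩
  have hmax : ∀ w, ndeg G w ≤ ndeg G u := fun w => hmaxu w (Finset.mem_univ w)
  by_cases hstar : starSub G u = ⊤
  · exact ⟨ndeg G u, star_iso_of_starSub_top u hstar⟩
  exfalso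
  set k := listChromaticIndex G with hk
  have hΔ : ndeg G u < k := by
    have := hcrit (starSub G u) hstar
    rwa [lcIndex_starSub] at this
  have hΔ1 : 1 ≤ ndeg G u := by
    have h1 : 0 < ndeg G u0 := by
      unfold ndeg
      rw [card_irrel (fintypeSetV _) (G.neighborSetFintype u0)]
      exact (@Fintype.card_pos_iff _ (G.neighborSetFintype u0)).2 ⟨⟨v0, hed⟩⟩
    exact le_trans h1 (hmax u0)
  set e0 : Sym2 V := s(u0, v0) with he0
  set He : G.Subgraph := delSub G e0 with hHe
  have hHne : He ≠ ⊤ := by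
    intro hcon
    have h2 : (⊤ : G.Subgraph).Adj u0 v0 := SimpleGraph.Subgraph.top_adj.2 hed
    rw [← hcon] at h2
    exact h2.2 rfl
  have hle : listChromaticIndex He.coe ≤ k - 1 := by
    have := hcrit He hHne
    omega
  have hch : Choosable He.coe.lineGraph (k-1) := choosable_of_lcn_le _ hle
  obtain ⟨cc, hccP, hccL⟩ := hch (fun _ => Finset.range (k-1)) (fun _ => Finset.card_range _)
  have hlift : ∀ f, f ∈ G.edgeSet → f ≠ e0 →
      ∃ f' : He.coe.edgeSet, Sym2.map Subtype.val f'.1 = f := by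
    intro f
    induction f with
    | _ a b =>
      intro hf hfne
      have hadj : He.coe.Adj ⟨a, Set.mem_univ a⟩ ⟨b, Set.mem_univ b⟩ := by
        rw [SimpleGraph.Subgraph.coe_adj]
        exact (delSub_adj).2 ⟨(G.mem_edgeSet).1 hf, hfne⟩
      refine ⟨⟨s(⟨a, Set.mem_univ a⟩, ⟨b, Set.mem_univ b⟩), (SimpleGraph.mem_edgeSet _).2 hadj⟩, ?_⟩
      rw [Sym2.map_pair_eq]
  set ψ : Sym2 V → ℕ := fun f =>
    if h : ∃ f' : He.coe.edgeSet, Sym2.map Subtype.val f'.1 = f then cc h.choose else 0 with hψdef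
  have hψeq : ∀ f, ψ f =
      if h : ∃ f' : He.coe.edgeSet, Sym2.map Subtype.val f'.1 = f then cc h.choose else 0 :=
    fun f => by rw [hψdef]
  have hψrange : ∀ f ∈ G.edgeSet, f ≠ e0 → ψ f ∈ Finset.range (k-1) := by
    intro f hf hfne
    have h := hlift f hf hfne
    rw [hψeq, dif_pos h]
    exact hccL _
  have hψproper : ∀ ed1 ∈ G.edgeSet, ed1 ≠ e0 → ∀ ed2 ∈ G.edgeSet, ed2 ≠ e0 →
      ed1 ≠ ed2 → (∃ w, w ∈ ed1 ∧ w ∈ ed2) → ψ ed1 ≠ ψ ed2 := by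
    intro ed1 hed1 hne1 ed2 hed2 hne2 hne12 ⟨w, hw1, hw2⟩
    have h1 := hlift ed1 hed1 hne1
    have h2 := hlift ed2 hed2 hne2
    rw [hψeq, hψeq, dif_pos h1, dif_pos h2]
    apply hccP
    refine (SimpleGraph.lineGraph_adj_iff_exists).2 ⟨?_, ?_⟩
    · intro hcon
      apply hne12
      rw [← h1.choose_spec, ← h2.choose_spec, hcon]
    · have hw1' : w ∈ Sym2.map Subtype.val (h1.choose).1 := by rw [h1.choose_spec]; exact hw1
      have hw2' : w ∈ Sym2.map Subtype.val (h2.choose).1 := by rw [h2.choose_spec]; exact hw2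
      obtain ⟨w1, hw1m, hw1v⟩ := Sym2.mem_map.1 hw1'
      obtain ⟨w2, hw2m, hw2v⟩ := Sym2.mem_map.1 hw2'
      have : w1 = w2 := Subtype.ext (hw1v.trans hw2v.symm)
      exact ⟨w1, hw1m, this ▸ hw2m⟩
  have c : G.Coloring (Fin 2) := hbip.some
  have hcadj : ∀ ⦃a b⦄, G.Adj a b → c a ≠ c b := fun a b h => c.valid h
  have hdeg : ∀ x, ndeg G x ≤ k - 1 := fun x => le_trans (hmax x) (by omega)
  obtain ⟨ψ', hr', hp'⟩ := kempe c hcadj (k-1) hdeg u0 v0 hed ψ hψrange hψproper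
  have hchoos : Choosable G.lineGraph (k-1) :=
    galvin_choosable c hcadj ψ' hp' (k-1) hr'
  have hfin : k ≤ k - 1 := lcn_le_of_choosable _ hchoos
  omega
end Main3


/-- The only bipartite `χ'_ℓ`-critical graphs with at least one edge are the
stars `K_{1,n}`. -/
theorem bipartite_edgeListCritical_iff_star
    {V : Type} [Fintype V] (G : SimpleGraph V)
    (hbip : G.Colorable 2) (hedge : G.edgeSet.Nonempty) :
    EdgeListCritical G ↔
      ∃ n : ℕ, Nonempty (G ≃g completeBipartiteGraph (Fin 1) (Fin n)) := by
  constructor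
  · intro hcrit
    exact critical_implies_star hbip hedge hcrit
  · rintro ⟨n, ⟨hiso⟩⟩
    exact star_implies_critical hedge hiso
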